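/- Let J, K be positive integers, p = J + K, and let Σ be a real symmetric positive definite p×p matrix, partitioned into blocks Σ₁₁ (J×J), Σ₁₂, Σ₂₁, Σ₂₂ according to the split of {1,…,p} into the first J and last K indices. Let Σ^{1/2} be the positive semidefinite square root of Σ, let M be the p×p block matrix with top-left J×J block Σ₁₁⁻¹ and all other blocks zero, and set A = I − Σ^{1/2} M Σ^{1/2}. Then A is symmetric (Aᵀ = A), idempotent (A² = A), and trace(A) = K. -/

import Mathlib

open Matrix

open scoped ComplexOrder in
/-- The positive semidefinite square root of a positive semidefinite matrix, as defined in
Mathlib (December 2024) under this name; the definition has since been removed. -/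
noncomputable def Matrix.PosSemidef.sqrt {n 𝕜 : Type*} [Fintype n] [RCLike 𝕜] [DecidableEq n]
    {A : Matrix n n 𝕜} (hA : A.PosSemidef) : Matrix n n 𝕜 :=
  hA.1.eigenvectorUnitary.1 * diagonal ((↑) ∘ (Real.sqrt ∘ hA.1.eigenvalues)) *
    (star hA.1.eigenvectorUnitary : Matrix n n 𝕜)

open scoped ComplexOrder in
lemma Matrix.PosSemidef.sqrt_mul_self {n 𝕜 : Type*} [Fintype n] [RCLike 𝕜] [DecidableEq n]
    {A : Matrix n n 𝕜} (hA : A.PosSemidef) : hA.sqrt * hA.sqrt = A := by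
  have hU : (star hA.1.eigenvectorUnitary : Matrix n n 𝕜) * hA.1.eigenvectorUnitary = 1 :=
    Unitary.coe_star_mul_self _
  conv_rhs => rw [hA.1.spectral_theorem, Unitary.conjStarAlgAut_apply]
  simp only [Matrix.PosSemidef.sqrt, Matrix.mul_assoc]
  rw [← Matrix.mul_assoc (star (hA.1.eigenvectorUnitary : Matrix n n 𝕜)), hU, Matrix.one_mul,
    ← Matrix.mul_assoc (diagonal _), diagonal_mul_diagonal]
  congr 3
  funext i
  simp only [Function.comp_apply]
  rw [← RCLike.ofReal_mul, Real.mul_self_sqrt (hA.eigenvalues_nonneg i)]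

open scoped ComplexOrder in
lemma Matrix.PosSemidef.isHermitian_sqrt {n 𝕜 : Type*} [Fintype n] [RCLike 𝕜] [DecidableEq n]
    {A : Matrix n n 𝕜} (hA : A.PosSemidef) : hA.sqrt.IsHermitian := by
  simp only [Matrix.IsHermitian, Matrix.PosSemidef.sqrt, conjTranspose_mul, Matrix.mul_assoc,
    diagonal_conjTranspose, star_eq_conjTranspose, conjTranspose_conjTranspose]
  congr 3
  funext i
  simp

lemma posDef_toBlocks₁₁' {J K : ℕ} {Sig : Matrix (Fin J ⊕ Fin K) (Fin J ⊕ Fin K) ℝ}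
    (hSig : Sig.PosDef) : (Sig.toBlocks₁₁).PosDef := by
  refine PosDef.of_dotProduct_mulVec_pos ?_ ?_
  · have h := hSig.1
    ext i j
    have := congrFun (congrFun h (Sum.inl i)) (Sum.inl j)
    simpa [toBlocks₁₁, conjTranspose_apply] using this
  · intro x hx
    have hy : (Sum.elim x 0 : Fin J ⊕ Fin K → ℝ) ≠ 0 := by
      intro h
      apply hx
      ext i
      exact congrFun h (Sum.inl i)
    have := hSig.dotProduct_mulVec_pos hy
    convert this using 1
    simp [dotProduct, Fintype.sum_sum_type, mulVec, toBlocks₁₁]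

lemma trace_fromBlocks' {J K : ℕ} (A : Matrix (Fin J) (Fin J) ℝ) (B : Matrix (Fin J) (Fin K) ℝ)
    (C : Matrix (Fin K) (Fin J) ℝ) (D : Matrix (Fin K) (Fin K) ℝ) :
    (fromBlocks A B C D).trace = A.trace + D.trace := by
  simp [Matrix.trace, Fintype.sum_sum_type, fromBlocks, Matrix.diag]

theorem stmt14 (J K : ℕ) (hJ : 0 < J) (hK : 0 < K)
    -- `Σ`, a real symmetric positive definite `p × p` matrix, `p = J + K`, with the
    -- rows/columns partitioned into the first `J` and the last `K` indices
    (Sig : Matrix (Fin J ⊕ Fin K) (Fin J ⊕ Fin K) ℝ) (hSig : Sig.PosDef)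
    -- the positive semidefinite square root of `Σ`
    (sqrtSig : Matrix (Fin J ⊕ Fin K) (Fin J ⊕ Fin K) ℝ)
    (hsqrt : sqrtSig = hSig.posSemidef.sqrt)
    -- `M`: the block matrix with top-left block `Σ₁₁⁻¹` and all other blocks zero
    (M : Matrix (Fin J ⊕ Fin K) (Fin J ⊕ Fin K) ℝ)
    (hM : M = fromBlocks (Sig.toBlocks₁₁)⁻¹ 0 0 0)
    (A : Matrix (Fin J ⊕ Fin K) (Fin J ⊕ Fin K) ℝ)
    (hA : A = 1 - sqrtSig * M * sqrtSig) :
    Aᵀ = A ∧ A * A = A ∧ A.trace = (K : ℝ) := by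
  have h11 : (Sig.toBlocks₁₁).PosDef := posDef_toBlocks₁₁' hSig
  have hdet : IsUnit (Sig.toBlocks₁₁).det := h11.det_pos.ne'.isUnit
  have hinv : (Sig.toBlocks₁₁)⁻¹ * Sig.toBlocks₁₁ = 1 := nonsing_inv_mul _ hdet
  have hinv' : Sig.toBlocks₁₁ * (Sig.toBlocks₁₁)⁻¹ = 1 := mul_nonsing_inv _ hdet
  have hS : sqrtSig * sqrtSig = Sig := by rw [hsqrt]; exact hSig.posSemidef.sqrt_mul_self
  have hSsym : sqrtSigᵀ = sqrtSig := by
    have h := hSig.posSemidef.isHermitian_sqrt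
    rw [hsqrt]
    ext i j
    exact congrFun (congrFun h i) j
  have hMsym : Mᵀ = M := by
    have h1 : ((Sig.toBlocks₁₁)⁻¹)ᵀ = (Sig.toBlocks₁₁)⁻¹ := by
      rw [transpose_nonsing_inv]
      congr 1
      ext i j
      exact congrFun (congrFun h11.isHermitian i) j
    rw [hM, fromBlocks_transpose]
    simp [h1]
  have hMSM : M * Sig * M = M := by
    rw [hM, ← Sig.fromBlocks_toBlocks, fromBlocks_multiply, fromBlocks_multiply]
    simp [hinv, Matrix.mul_assoc, hinv']
  have hB : (sqrtSig * M * sqrtSig) * (sqrtSig * M * sqrtSig) = sqrtSig * M * sqrtSig := by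
    have : (sqrtSig * M * sqrtSig) * (sqrtSig * M * sqrtSig)
        = sqrtSig * (M * Sig * M) * sqrtSig := by
      rw [← hS]
      simp only [Matrix.mul_assoc]
    rw [this, hMSM]
  refine ⟨?_, ?_, ?_⟩
  · rw [hA, transpose_sub, transpose_one, transpose_mul, transpose_mul, hSsym, hMsym,
      Matrix.mul_assoc]
  · rw [hA, mul_sub, sub_mul, sub_mul, one_mul, mul_one, hB]
    simp
  · rw [hA, trace_sub, trace_one]
    have htr : (sqrtSig * M * sqrtSig).trace = (J : ℝ) := by
      rw [trace_mul_cycle, hS, hM, ← Sig.fromBlocks_toBlocks,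
        fromBlocks_multiply]
      simp [hinv', trace_fromBlocks', trace_one]
    rw [htr]
    simp [Fintype.card_sum]
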